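/- Let n ≥ 1 and let w ∈ S^B_n be a signed permutation. Then no reduced word for w contains three consecutive letters i (i±1) i for some i ∈ {1,…,n−1} if and only if in every reduced word for w, for every i ∈ {1,…,n−1}, any two occurrences of the letter i are separated by at least one occurrence of the letter i−1 and at least one occurrence of the letter i+1 (the letter n never appears, so a required separating letter n can never be present). -/

import Mathlib

namespace Stmt5

/-- The Coxeter generator `sᵢ` of the hyperoctahedral group, acting on `ℤ`:
`s₀` swaps `-1` and `1`; for `i ≥ 1`, `sᵢ` swaps `i` with `i+1` and `-i` with `-(i+1)`. -/
def sB (i : ℕ) : Equiv.Perm ℤ :=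
  if i = 0 then Equiv.swap (-1 : ℤ) 1
  else Equiv.swap (i : ℤ) ((i : ℤ) + 1) * Equiv.swap (-(i : ℤ)) (-((i : ℤ) + 1))

/-- `w` is a signed permutation in `S^B_n`: a bijection of `ℤ` with
`w(-i) = -w(i)` for all `i` and `w(i) = i` whenever `|i| > n`. -/
def IsSignedPerm (n : ℕ) (w : Equiv.Perm ℤ) : Prop :=
  (∀ i : ℤ, w (-i) = -(w i)) ∧ ∀ i : ℤ, (n : ℤ) < |i| → w i = i

/-- `l` is a word for `w` in the letters `{0, …, n-1}`. -/
def IsWordB (n : ℕ) (w : Equiv.Perm ℤ) (l : List ℕ) : Prop :=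
  (∀ i ∈ l, i + 1 ≤ n) ∧ (l.map sB).prod = w

/-- The Coxeter length of `w`: the minimal length of a word for `w`. -/
noncomputable def lenB (n : ℕ) (w : Equiv.Perm ℤ) : ℕ :=
  sInf {m | ∃ l : List ℕ, IsWordB n w l ∧ l.length = m}

/-- The disarray `dis(w) = ∑_{i=1}^n |w(i) - i|`. -/
noncomputable def disB (n : ℕ) (w : Equiv.Perm ℤ) : ℤ :=
  ∑ i ∈ Finset.Icc (1 : ℤ) (n : ℤ), |w i - i|

/-- The unfrozen integers for `S^B_n` are `{-n, …, -1, 1, …, n}`. -/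
def Unfrozen (n : ℕ) (i : ℤ) : Prop := i ≠ 0 ∧ |i| ≤ (n : ℤ)

/-- `w` globally contains the pattern `321`: there are unfrozen integers
`i < j < k` with `w(i) > w(j) > w(k)`. -/
def GloballyContains321 (n : ℕ) (w : Equiv.Perm ℤ) : Prop :=
  ∃ i j k : ℤ, Unfrozen n i ∧ Unfrozen n j ∧ Unfrozen n k ∧
    i < j ∧ j < k ∧ w i > w j ∧ w j > w k

/-- `l` is a reduced word for `w`. -/
def IsReducedWordB (n : ℕ) (w : Equiv.Perm ℤ) (l : List ℕ) : Prop :=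
  IsWordB n w l ∧ l.length = lenB n w

/-- `l` contains three consecutive letters of the form `i (i±1) i`
for some `i ∈ {1, …, n-1}`. -/
def HasBadFactorB (n : ℕ) (l : List ℕ) : Prop :=
  ∃ i j : ℕ, 1 ≤ i ∧ i + 1 ≤ n ∧ (j = i + 1 ∨ i = j + 1) ∧ [i, j, i] <:+: l

/-- In `l`, for every `i ∈ {1, …, n-1}`, any two occurrences of the letter `i`
are separated by at least one occurrence of the letter `i-1` and at least one
occurrence of the letter `i+1`. -/
def SeparatedOccurrencesB (n : ℕ) (l : List ℕ) : Prop :=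
  ∀ i : ℕ, 1 ≤ i → i + 1 ≤ n →
    ∀ p q : Fin l.length, p < q → l.get p = i → l.get q = i →
      (∃ r : Fin l.length, p < r ∧ r < q ∧ l.get r + 1 = i) ∧
      (∃ r : Fin l.length, p < r ∧ r < q ∧ l.get r = i + 1)

/-! ### Auxiliary lemmas -/

lemma sB_fix {i : ℕ} {x : ℤ} (h1 : x ≠ (i : ℤ)) (h2 : x ≠ (i : ℤ) + 1)
    (h3 : x ≠ -(i : ℤ)) (h4 : x ≠ -((i : ℤ) + 1)) : sB i x = x := by
  unfold sB
  split_ifs with h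
  · subst h
    push_cast at h2 h4
    exact Equiv.swap_apply_of_ne_of_ne (by simpa using h4) (by simpa using h2)
  · rw [Equiv.Perm.mul_apply, Equiv.swap_apply_of_ne_of_ne h3 h4,
      Equiv.swap_apply_of_ne_of_ne h1 h2]

lemma disjoint_swap {a b c d : ℤ} (h1 : a ≠ c) (h2 : a ≠ d) (h3 : b ≠ c) (h4 : b ≠ d) :
    (Equiv.swap a b).Disjoint (Equiv.swap c d) := by
  intro x
  by_cases hx : x = a ∨ x = b
  · right; rcases hx with rfl | rfl <;>
      exact Equiv.swap_apply_of_ne_of_ne (by assumption) (by assumption)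
  · push_neg at hx; left; exact Equiv.swap_apply_of_ne_of_ne hx.1 hx.2

lemma sB_mul_self (i : ℕ) : sB i * sB i = 1 := by
  unfold sB
  split_ifs with h
  · exact Equiv.swap_mul_self _ _
  · have hi : (1 : ℤ) ≤ (i : ℤ) := by exact_mod_cast Nat.one_le_iff_ne_zero.2 h
    have hc : Commute (Equiv.swap (i : ℤ) ((i : ℤ) + 1)) (Equiv.swap (-(i : ℤ)) (-((i : ℤ) + 1))) :=
      (disjoint_swap (by omega) (by omega) (by omega) (by omega)).commute
    set s := Equiv.swap (i : ℤ) ((i : ℤ) + 1)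
    set t := Equiv.swap (-(i : ℤ)) (-((i : ℤ) + 1))
    have e : (s*t)*(s*t) = (s*s)*(t*t) := by
      rw [mul_assoc s t (s*t), ← mul_assoc t s t, hc.symm.eq, mul_assoc s t t, ← mul_assoc]
    rw [e, Equiv.swap_mul_self, Equiv.swap_mul_self, one_mul]

lemma commute_sB {a m : ℕ} (h1 : a ≠ m) (h2 : a ≠ m + 1) (h3 : m ≠ a + 1) :
    Commute (sB a) (sB m) := by
  have key : ∀ x : ℤ, sB a x = x ∨ sB m x = x := by
    intro x
    by_cases hx : x = (m : ℤ) ∨ x = (m : ℤ) + 1 ∨ x = -(m : ℤ) ∨ x = -((m : ℤ) + 1)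
    · left
      have ham : (a : ℤ) ≠ m := by exact_mod_cast h1
      have ham2 : (a : ℤ) + 2 ≤ m ∨ (m : ℤ) + 2 ≤ a := by
        have := h2; have := h3; omega
      apply sB_fix <;> rcases hx with rfl | rfl | rfl | rfl <;> omega
    · right
      push_neg at hx
      exact sB_fix hx.1 hx.2.1 hx.2.2.1 hx.2.2.2
  exact Equiv.Perm.Disjoint.commute key

lemma getElem_idx_congr {l : List ℕ} {i j : ℕ} (h : i = j) (hi : i < l.length) :
    l[i]'hi = l[j]'(h ▸ hi) := by subst h; rfl

lemma eq_decomp (l : List ℕ) (p : ℕ) (h : p + 1 < l.length) :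
    l = l.take p ++ l[p] :: l[p+1] :: l.drop (p+2) := by
  conv_lhs => rw [← List.take_append_drop p l]
  rw [List.drop_eq_getElem_cons (by omega), List.drop_eq_getElem_cons (by omega)]

lemma no_shorter {n w l} (hl : IsReducedWordB n w l) {l' : List ℕ} (hl' : IsWordB n w l') :
    l.length ≤ l'.length := hl.2 ▸ Nat.sInf_le ⟨l', hl', rfl⟩

/-- Two equal adjacent letters in a reduced word: impossible. -/
lemma cancel {n w l} (hl : IsReducedWordB n w l) {p : ℕ} (h : p + 1 < l.length)
    (he : l[p]'(by omega) = l[p+1]'h) : False := by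
  have hword : IsWordB n w (l.take p ++ l.drop (p+2)) := by
    constructor
    · intro i hi
      rcases List.mem_append.1 hi with hi | hi
      · exact hl.1.1 i (List.take_subset _ _ hi)
      · exact hl.1.1 i (List.drop_subset _ _ hi)
    · have := hl.1.2
      conv_lhs at this => rw [eq_decomp l p h]
      rw [← he] at this
      simp only [List.map_append, List.map_cons, List.prod_append, List.prod_cons,
        mul_assoc] at this ⊢
      rw [← this, mul_right_inj, ← mul_assoc, sB_mul_self, one_mul]
  have hle := no_shorter hl hword
  have : (l.take p ++ l.drop (p+2)).length = l.length - 2 := by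
    simp only [List.length_append, List.length_take, List.length_drop]; omega
  omega

/-- Swapping two adjacent commuting letters preserves being a reduced word. -/
lemma swap_word {n w l} (hl : IsReducedWordB n w l) {p : ℕ} (h : p + 1 < l.length)
    (hc : Commute (sB (l[p]'(by omega))) (sB (l[p+1]'h))) :
    IsReducedWordB n w (l.take p ++ (l[p+1]'h) :: (l[p]'(by omega)) :: l.drop (p+2)) := by
  have hlen : (l.take p ++ (l[p+1]'h) :: (l[p]'(by omega)) :: l.drop (p+2)).length = l.length := by
    simp only [List.length_append, List.length_take, List.length_cons, List.length_drop]; omega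
  refine ⟨⟨?_, ?_⟩, by rw [hlen]; exact hl.2⟩
  · intro i hi
    rcases List.mem_append.1 hi with hi | hi
    · exact hl.1.1 i (List.take_subset _ _ hi)
    · rcases List.mem_cons.1 hi with rfl | hi
      · exact hl.1.1 _ (List.getElem_mem _)
      rcases List.mem_cons.1 hi with rfl | hi
      · exact hl.1.1 _ (List.getElem_mem _)
      · exact hl.1.1 i (List.drop_subset _ _ hi)
  · have := hl.1.2
    conv_lhs at this => rw [eq_decomp l p h]
    simp only [List.map_append, List.map_cons, List.prod_append, List.prod_cons,
      mul_assoc] at this ⊢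
    rw [← this, mul_right_inj, ← mul_assoc, ← mul_assoc, hc.eq]

lemma len_swap {l : List ℕ} {p : ℕ} (h : p + 1 < l.length) (b c : ℕ) :
    (l.take p ++ b :: c :: l.drop (p+2)).length = l.length := by
  simp only [List.length_append, List.length_take, List.length_cons, List.length_drop]; omega

lemma get_swap_lt {l : List ℕ} {p r : ℕ} (h : p + 1 < l.length) (b c : ℕ) (hr : r < p) :
    (l.take p ++ b :: c :: l.drop (p+2))[r]'(by rw [len_swap h]; omega) = l[r]'(by omega) := by
  rw [List.getElem_append_left (by rw [List.length_take]; omega), List.getElem_take]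

lemma get_swap_p {l : List ℕ} {p : ℕ} (h : p + 1 < l.length) (b c : ℕ) :
    (l.take p ++ b :: c :: l.drop (p+2))[p]'(by rw [len_swap h]; omega) = b := by
  rw [List.getElem_append_right (by rw [List.length_take]; omega)]
  have e : p - (l.take p).length = 0 := by rw [List.length_take]; omega
  rw [getElem_idx_congr e]
  rfl

lemma get_swap_p1 {l : List ℕ} {p : ℕ} (h : p + 1 < l.length) (b c : ℕ) :
    (l.take p ++ b :: c :: l.drop (p+2))[p+1]'(by rw [len_swap h]; omega) = c := by
  rw [List.getElem_append_right (by rw [List.length_take]; omega)]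
  have e : p + 1 - (l.take p).length = 1 := by rw [List.length_take]; omega
  rw [getElem_idx_congr e]
  rfl

lemma get_swap_gt {l : List ℕ} {p r : ℕ} (h : p + 1 < l.length) (b c : ℕ)
    (hr : p + 2 ≤ r) (hr2 : r < l.length) :
    (l.take p ++ b :: c :: l.drop (p+2))[r]'(by rw [len_swap h]; omega) = l[r]'hr2 := by
  rw [List.getElem_append_right (by rw [List.length_take]; omega)]
  have e1 : r - (l.take p).length = (r - p - 2) + 2 := by rw [List.length_take]; omega
  rw [getElem_idx_congr e1, List.getElem_cons_succ, List.getElem_cons_succ, List.getElem_drop]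
  exact getElem_idx_congr (by omega) _

lemma infix_three' (l : List ℕ) (p : ℕ) (h : p + 2 < l.length) {x y z : ℕ}
    (hx : l[p]'(by omega) = x) (hy : l[p+1]'(by omega) = y) (hz : l[p+2]'h = z) :
    [x, y, z] <:+: l := by
  subst hx hy hz
  refine ⟨l.take p, l.drop (p+3), ?_⟩
  conv_rhs => rw [← List.take_append_drop p l]
  rw [List.drop_eq_getElem_cons (show p < l.length by omega),
    List.drop_eq_getElem_cons (show p + 1 < l.length by omega),
    List.drop_eq_getElem_cons (show p + 2 < l.length from h)]
  simp

lemma infix_three (l : List ℕ) (p : ℕ) (h : p + 2 < l.length) :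
    [l[p]'(by omega), l[p+1]'(by omega), l[p+2]'h] <:+: l := by
  refine ⟨l.take p, l.drop (p+3), ?_⟩
  conv_rhs => rw [← List.take_append_drop p l]
  rw [List.drop_eq_getElem_cons (show p < l.length by omega),
    List.drop_eq_getElem_cons (show p + 1 < l.length by omega),
    List.drop_eq_getElem_cons (show p + 2 < l.length from h)]
  simp

/-- The key combinatorial lemma: in a reduced word for `w` (where no reduced word
of `w` contains a bad factor), a pair of equal letters `m` with no `m` strictly
in between must have both an `m+1` and (if `m ≥ 1`) an `m-1` strictly in between. -/
lemma key {n : ℕ} {w : Equiv.Perm ℤ}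
    (hbad : ∀ l, IsReducedWordB n w l → ¬ HasBadFactorB n l) :
    ∀ d : ℕ, ∀ l : List ℕ, IsReducedWordB n w l → ∀ m p q : ℕ,
      ∀ hp : p < l.length, ∀ hq : q < l.length, p < q → q - p ≤ d →
      l[p] = m → l[q] = m →
      (∀ r, ∀ hr : r < l.length, p < r → r < q → l[r] ≠ m) →
      ((∀ r, ∀ hr : r < l.length, p < r → r < q → l[r] ≠ m + 1) ∨
       (1 ≤ m ∧ ∀ r, ∀ hr : r < l.length, p < r → r < q → l[r] + 1 ≠ m)) → False := by
  intro d
  induction d with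
  | zero => intro l hl m p q hp hq hpq hd; omega
  | succ d ih =>
    intro l hl m p q hp hq hpq hd hgp hgq hno hcase
    -- adjacent equal letters case
    by_cases hq1 : q = p + 1
    · exact cancel hl (hq1 ▸ hq)
        (by rw [hgp, getElem_idx_congr (show p + 1 = q from hq1.symm), hgq])
    have hq2lt : p + 1 < q := by omega
    have hb' : q - 1 < l.length := by omega
    have hqm1 : p < q - 1 := by omega
    -- the letter just before position q
    have hbm : l[q-1]'hb' ≠ m := hno (q-1) hb' (by omega) (by omega)
    have hm_mem : m ∈ l := hgp ▸ List.getElem_mem hp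
    have hmn : m + 1 ≤ n := hl.1.1 m hm_mem
    have ha' : p + 1 < l.length := by omega
    have ham : l[p+1]'ha' ≠ m := hno (p+1) ha' (by omega) (by omega)
    rcases hcase with hA | hB
    · -- Case I: no `m+1` strictly between `p` and `q`.
      have hb1 : l[q-1]'hb' ≠ m + 1 := hA (q-1) hb' (by omega) (by omega)
      by_cases hbm1 : m = l[q-1]'hb' + 1
      · -- the letter before `q` is `m-1`
        by_cases hq2 : q = p + 2
        · -- bad factor [m, m-1, m]
          apply hbad l hl
          refine ⟨m, l[q-1]'hb', by omega, hmn, Or.inr hbm1, ?_⟩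
          have h3 : p + 2 < l.length := by omega
          exact infix_three' l p h3 hgp (getElem_idx_congr (show p + 1 = q - 1 by omega) _)
            ((getElem_idx_congr (show p + 2 = q by omega) h3).trans hgq)
        · -- q > p + 2 : examine the letter just after position p
          have ha1 : l[p+1]'ha' ≠ m + 1 := hA (p+1) ha' (by omega) (by omega)
          by_cases ham1 : m = l[p+1]'ha' + 1
          · -- both neighbours equal `m-1`; recurse on the letter `m-1`
            have hab : l[p+1]'ha' = l[q-1]'hb' := by omega
            set S : Set ℕ := {r | p + 1 < r ∧ r < q ∧ ∃ h : r < l.length, l[r] = l[q-1]'hb'}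
              with hSdef
            have hSne : S.Nonempty := ⟨q - 1, by omega, by omega, hb', rfl⟩
            obtain ⟨hq'1, hq'2, hq'len, hq'val⟩ := Nat.sInf_mem hSne
            refine ih l hl (l[q-1]'hb') (p+1) (sInf S) ha' hq'len (by omega) (by omega)
              hab hq'val ?_ (Or.inl ?_)
            · intro r hr h1 h2 hrv
              have hmem : r ∈ S := ⟨by omega, by omega, hr, hrv⟩
              have := Nat.sInf_le hmem
              omega
            · intro r hr h1 h2
              have := hno r hr (by omega) (by omega)
              omega
          · -- the letter after `p` commutes with `m`: swap it across
            have hc : Commute (sB (l[p]'(by omega))) (sB (l[p+1]'ha')) := by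
              rw [hgp]
              exact commute_sB (by omega) (by omega) (by omega)
            have hl' := swap_word hl ha' hc
            set l' := l.take p ++ (l[p+1]'ha') :: (l[p]'(by omega)) :: l.drop (p+2) with hl'def
            have hlen' : l'.length = l.length := len_swap ha' _ _
            refine ih l' hl' m (p+1) q (by omega) (by omega) (by omega) (by omega)
              ?_ ?_ ?_ (Or.inl ?_)
            · rw [getElem_idx_congr rfl]; rw [get_swap_p1 ha']; exact hgp
            · rw [get_swap_gt ha' _ _ (by omega) hq]; exact hgq
            · intro r hr h1 h2
              rw [get_swap_gt ha' _ _ (by omega) (by omega)]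
              exact hno r (by omega) (by omega) (by omega)
            · intro r hr h1 h2
              rw [get_swap_gt ha' _ _ (by omega) (by omega)]
              exact hA r (by omega) (by omega) (by omega)
      · -- the letter before `q` commutes with `m`: swap it across
        have hq' : (q - 1) + 1 < l.length := by omega
        have hc : Commute (sB (l[q-1]'(by omega))) (sB (l[(q-1)+1]'hq')) := by
          rw [getElem_idx_congr (show (q-1)+1 = q by omega), hgq]
          exact commute_sB hbm hb1 hbm1
        have hl' := swap_word hl hq' hc
        set l' := l.take (q-1) ++ (l[(q-1)+1]'hq') :: (l[q-1]'(by omega)) :: l.drop ((q-1)+2)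
          with hl'def
        have hlen' : l'.length = l.length := len_swap hq' _ _
        refine ih l' hl' m p (q-1) (by omega) (by omega) (by omega) (by omega)
          ?_ ?_ ?_ (Or.inl ?_)
        · rw [get_swap_lt hq' _ _ (by omega)]; exact hgp
        · rw [get_swap_p hq', getElem_idx_congr (show (q-1)+1 = q by omega), hgq]
        · intro r hr h1 h2
          rw [get_swap_lt hq' _ _ (by omega)]
          exact hno r (by omega) (by omega) (by omega)
        · intro r hr h1 h2
          rw [get_swap_lt hq' _ _ (by omega)]
          exact hA r (by omega) (by omega) (by omega)
    · -- Case II: `m ≥ 1` and no `m-1` strictly between `p` and `q`.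
      obtain ⟨hm1, hB⟩ := hB
      have hbB : l[q-1]'hb' + 1 ≠ m := hB (q-1) hb' (by omega) (by omega)
      by_cases hb1 : l[q-1]'hb' = m + 1
      · -- the letter before `q` is `m+1`
        by_cases hq2 : q = p + 2
        · -- bad factor [m, m+1, m]
          apply hbad l hl
          refine ⟨m, l[q-1]'hb', hm1, hmn, Or.inl hb1, ?_⟩
          have h3 : p + 2 < l.length := by omega
          exact infix_three' l p h3 hgp (getElem_idx_congr (show p + 1 = q - 1 by omega) _)
            ((getElem_idx_congr (show p + 2 = q by omega) h3).trans hgq)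
        · have haB : l[p+1]'ha' + 1 ≠ m := hB (p+1) ha' (by omega) (by omega)
          by_cases ha1 : l[p+1]'ha' = m + 1
          · -- both neighbours equal `m+1`; recurse on the letter `m+1`
            have hab : l[p+1]'ha' = l[q-1]'hb' := by omega
            set S : Set ℕ := {r | p + 1 < r ∧ r < q ∧ ∃ h : r < l.length, l[r] = l[q-1]'hb'}
              with hSdef
            have hSne : S.Nonempty := ⟨q - 1, by omega, by omega, hb', rfl⟩
            obtain ⟨hq'1, hq'2, hq'len, hq'val⟩ := Nat.sInf_mem hSne
            refine ih l hl (l[q-1]'hb') (p+1) (sInf S) ha' hq'len (by omega) (by omega)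
              hab hq'val ?_ (Or.inr ⟨by omega, ?_⟩)
            · intro r hr h1 h2 hrv
              have hmem : r ∈ S := ⟨by omega, by omega, hr, hrv⟩
              have := Nat.sInf_le hmem
              omega
            · intro r hr h1 h2
              have := hno r hr (by omega) (by omega)
              omega
          · -- the letter after `p` commutes with `m`: swap it across
            have hc : Commute (sB (l[p]'(by omega))) (sB (l[p+1]'ha')) := by
              rw [hgp]
              exact commute_sB (by omega) (by omega) (by omega)
            have hl' := swap_word hl ha' hc
            set l' := l.take p ++ (l[p+1]'ha') :: (l[p]'(by omega)) :: l.drop (p+2) with hl'def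
            have hlen' : l'.length = l.length := len_swap ha' _ _
            refine ih l' hl' m (p+1) q (by omega) (by omega) (by omega) (by omega)
              ?_ ?_ ?_ (Or.inr ⟨hm1, ?_⟩)
            · rw [getElem_idx_congr rfl]; rw [get_swap_p1 ha']; exact hgp
            · rw [get_swap_gt ha' _ _ (by omega) hq]; exact hgq
            · intro r hr h1 h2
              rw [get_swap_gt ha' _ _ (by omega) (by omega)]
              exact hno r (by omega) (by omega) (by omega)
            · intro r hr h1 h2
              rw [get_swap_gt ha' _ _ (by omega) (by omega)]
              exact hB r (by omega) (by omega) (by omega)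
      · -- the letter before `q` commutes with `m`: swap it across
        have hq' : (q - 1) + 1 < l.length := by omega
        have hc : Commute (sB (l[q-1]'(by omega))) (sB (l[(q-1)+1]'hq')) := by
          rw [getElem_idx_congr (show (q-1)+1 = q by omega), hgq]
          exact commute_sB hbm hb1 (by omega)
        have hl' := swap_word hl hq' hc
        set l' := l.take (q-1) ++ (l[(q-1)+1]'hq') :: (l[q-1]'(by omega)) :: l.drop ((q-1)+2)
          with hl'def
        have hlen' : l'.length = l.length := len_swap hq' _ _
        refine ih l' hl' m p (q-1) (by omega) (by omega) (by omega) (by omega)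
          ?_ ?_ ?_ (Or.inr ⟨hm1, ?_⟩)
        · rw [get_swap_lt hq' _ _ (by omega)]; exact hgp
        · rw [get_swap_p hq', getElem_idx_congr (show (q-1)+1 = q by omega), hgq]
        · intro r hr h1 h2
          rw [get_swap_lt hq' _ _ (by omega)]
          exact hno r (by omega) (by omega) (by omega)
        · intro r hr h1 h2
          rw [get_swap_lt hq' _ _ (by omega)]
          exact hB r (by omega) (by omega) (by omega)

theorem stmt_5 (n : ℕ) (hn : 1 ≤ n) (w : Equiv.Perm ℤ) (hw : IsSignedPerm n w) :
    (∀ l : List ℕ, IsReducedWordB n w l → ¬ HasBadFactorB n l) ↔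
      ∀ l : List ℕ, IsReducedWordB n w l → SeparatedOccurrencesB n l := by
  constructor
  · -- no bad factor → separated occurrences
    intro hbad l hl i h1 h2 p q hpq hgp hgq
    simp only [List.get_eq_getElem] at hgp hgq
    have hpq' : (p : ℕ) < (q : ℕ) := hpq
    constructor
    · -- existence of an `i-1` between
      by_contra hcon
      push_neg at hcon
      set S : Set ℕ := {r | (p : ℕ) < r ∧ r ≤ (q : ℕ) ∧ ∃ h : r < l.length, l[r] = i} with hSdef
      have hSne : S.Nonempty := ⟨q, hpq', le_refl _, q.isLt, hgq⟩
      obtain ⟨hq'1, hq'2, hq'len, hq'val⟩ := Nat.sInf_mem hSne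
      refine key hbad (sInf S - p) l hl i p (sInf S) p.isLt hq'len hq'1 (le_refl _)
        hgp hq'val ?_ (Or.inr ⟨h1, ?_⟩)
      · intro r hr hr1 hr2 hrv
        have hmem : r ∈ S := ⟨hr1, by omega, hr, hrv⟩
        have := Nat.sInf_le hmem
        omega
      · intro r hr hr1 hr2 hrv
        have := hcon ⟨r, hr⟩ hr1 (show r < (q : ℕ) by omega)
        simp only [List.get_eq_getElem] at this
        exact this hrv
    · -- existence of an `i+1` between
      by_contra hcon
      push_neg at hcon
      set S : Set ℕ := {r | (p : ℕ) < r ∧ r ≤ (q : ℕ) ∧ ∃ h : r < l.length, l[r] = i} with hSdef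
      have hSne : S.Nonempty := ⟨q, hpq', le_refl _, q.isLt, hgq⟩
      obtain ⟨hq'1, hq'2, hq'len, hq'val⟩ := Nat.sInf_mem hSne
      refine key hbad (sInf S - p) l hl i p (sInf S) p.isLt hq'len hq'1 (le_refl _)
        hgp hq'val ?_ (Or.inl ?_)
      · intro r hr hr1 hr2 hrv
        have hmem : r ∈ S := ⟨hr1, by omega, hr, hrv⟩
        have := Nat.sInf_le hmem
        omega
      · intro r hr hr1 hr2 hrv
        have := hcon ⟨r, hr⟩ hr1 (show r < (q : ℕ) by omega)
        simp only [List.get_eq_getElem] at this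
        exact this hrv
  · -- separated occurrences → no bad factor
    intro hsep l hl ⟨i, j, h1, h2, hij, s, t, hst⟩
    subst hst
    have hlen : (s ++ [i, j, i] ++ t).length = s.length + 3 + t.length := by
      simp only [List.length_append, List.length_cons, List.length_nil]
    have hps : s.length < (s ++ [i, j, i] ++ t).length := by omega
    have hps2 : s.length + 2 < (s ++ [i, j, i] ++ t).length := by omega
    have hsl : (s ++ [i, j, i]).length = s.length + 3 := by
      simp only [List.length_append, List.length_cons, List.length_nil]
    have hg0 : (s ++ [i, j, i] ++ t)[s.length]'hps = i := by
      rw [List.getElem_append_left (by omega), List.getElem_append_right (le_refl _)]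
      have e : s.length - s.length = 0 := by omega
      rw [getElem_idx_congr e]
      rfl
    have hg1 : (s ++ [i, j, i] ++ t)[s.length + 1]'(by omega) = j := by
      rw [List.getElem_append_left (by omega), List.getElem_append_right (by omega)]
      have e : s.length + 1 - s.length = 1 := by omega
      rw [getElem_idx_congr e]
      rfl
    have hg2 : (s ++ [i, j, i] ++ t)[s.length + 2]'hps2 = i := by
      rw [List.getElem_append_left (by omega), List.getElem_append_right (by omega)]
      have e : s.length + 2 - s.length = 2 := by omega
      rw [getElem_idx_congr e]
      rfl
    obtain ⟨⟨r1, hr1a, hr1b, hr1v⟩, ⟨r2, hr2a, hr2b, hr2v⟩⟩ :=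
      hsep _ hl i h1 h2 ⟨s.length, hps⟩ ⟨s.length + 2, hps2⟩ (Fin.mk_lt_mk.2 (by omega))
        (by simpa using hg0) (by simpa using hg2)
    have hr1 : (r1 : ℕ) = s.length + 1 := by
      rw [Fin.lt_def] at hr1a hr1b; simp at hr1a hr1b; omega
    have hr2 : (r2 : ℕ) = s.length + 1 := by
      rw [Fin.lt_def] at hr2a hr2b; simp at hr2a hr2b; omega
    simp only [List.get_eq_getElem] at hr1v hr2v
    rw [getElem_idx_congr hr1, hg1] at hr1v
    rw [getElem_idx_congr hr2, hg1] at hr2v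
    omega

end Stmt5
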